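/- Let $d \geq 3$, let $\mathcal{L}_1 \in \mathrm{GL}_d(\mathbb{R})$ be the identity, and for each $2 \leq j \leq d$ let $\mathcal{L}_j \in \mathrm{GL}_d(\mathbb{R})$ satisfy $\mathcal{L}_j(e_1) = e_j$, $\mathcal{L}_j(e_j) = -e_1$, and $\mathcal{L}_j(e_i) = e_i$ for $i \in [d] \setminus \{1, j\}$. Then $\mathcal{L}_1, \dots, \mathcal{L}_d$ are $\mathbb{R}$-irreducible: there are no subspaces $U, V \subseteq \mathbb{R}^d$ with $\{0\} \neq U \neq \mathbb{R}^d$, $\dim U = \dim V$, and $\mathcal{L}_i(U) \subseteq V$ for all $i \in [d]$. -/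

import Mathlib

/-- Let `d ≥ 3`, let `𝓛₁ = id` and for `j ≠ 1` let `𝓛_j` send `e₁ ↦ e_j`, `e_j ↦ -e₁`
and fix the other basis vectors.  Then `𝓛₁, …, 𝓛_d` are `ℝ`-irreducible: there are no
subspaces `U, V ⊆ ℝ^d` with `{0} ≠ U ≠ ℝ^d`, `dim U = dim V` and `𝓛ᵢ(U) ⊆ V` for all
`i`.  (Index `0` of `Fin d` plays the role of the index `1` in the paper.) -/
theorem stmt_17 (d : ℕ) (hd : 3 ≤ d)
    (L : Fin d → ((Fin d → ℝ) →ₗ[ℝ] (Fin d → ℝ)))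
    (hL0 : L ⟨0, by omega⟩ = LinearMap.id)
    (hLj : ∀ j : Fin d, j ≠ ⟨0, by omega⟩ →
      L j (Pi.single (⟨0, by omega⟩ : Fin d) (1 : ℝ)) = Pi.single j (1 : ℝ) ∧
      L j (Pi.single j (1 : ℝ)) = -(Pi.single (⟨0, by omega⟩ : Fin d) (1 : ℝ)) ∧
      ∀ i : Fin d, i ≠ ⟨0, by omega⟩ → i ≠ j →
        L j (Pi.single i (1 : ℝ)) = Pi.single i (1 : ℝ)) :
    ¬ ∃ U V : Submodule ℝ (Fin d → ℝ), U ≠ ⊥ ∧ U ≠ ⊤ ∧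
        Module.finrank ℝ U = Module.finrank ℝ V ∧
        ∀ i, U.map (L i) ≤ V := by
  rintro ⟨U, V, hU0, hUt, hdim, hmap⟩
  set z : Fin d := ⟨0, by omega⟩ with hzdef
  set e : Fin d → (Fin d → ℝ) := fun i => Pi.single i 1 with he
  -- U ≤ V, hence U = V by equal finrank
  have hUV : U ≤ V := by
    have h := hmap z
    rwa [hL0, Submodule.map_id] at h
  have hUeqV : U = V := Submodule.eq_of_le_of_finrank_eq hUV hdim
  -- U is invariant
  have hinv : ∀ j : Fin d, ∀ y ∈ U, L j y ∈ U := by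
    intro j y hy
    rw [hUeqV]
    exact hmap j ⟨y, hy, rfl⟩
  -- the formula for L j on an arbitrary vector
  have hform : ∀ j : Fin d, j ≠ z → ∀ y : Fin d → ℝ,
      L j y = y - (y z + y j) • e z + (y z - y j) • e j := by
    intro j hj
    have hLeq : L j = LinearMap.id
        - ((((LinearMap.proj z : (Fin d → ℝ) →ₗ[ℝ] ℝ) + (LinearMap.proj j : (Fin d → ℝ) →ₗ[ℝ] ℝ))).smulRight (e z))
        + ((((LinearMap.proj z : (Fin d → ℝ) →ₗ[ℝ] ℝ) - (LinearMap.proj j : (Fin d → ℝ) →ₗ[ℝ] ℝ))).smulRight (e j)) := by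
      apply Module.Basis.ext (Pi.basisFun ℝ (Fin d))
      intro i
      obtain ⟨h1, h2, h3⟩ := hLj j hj
      have hb : (Pi.basisFun ℝ (Fin d)) i = Pi.single i 1 := by
        ext k; simp [Pi.basisFun_apply, Pi.single_apply, Function.update, eq_comm]
      rw [hb]
      simp only [LinearMap.add_apply, LinearMap.sub_apply, LinearMap.id_apply,
        LinearMap.smulRight_apply, LinearMap.proj_apply, he]
      by_cases hiz : i = z
      · subst hiz
        rw [h1, Pi.single_eq_same, Pi.single_eq_of_ne hj]
        module
      · by_cases hij : i = j
        · subst hij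
          rw [h2, Pi.single_eq_same, Pi.single_eq_of_ne (Ne.symm hj)]
          module
        · rw [h3 i hiz hij, Pi.single_eq_of_ne (Ne.symm hiz), Pi.single_eq_of_ne (Ne.symm hij)]
          module
    intro y
    rw [hLeq]
    simp only [LinearMap.add_apply, LinearMap.sub_apply, LinearMap.id_apply,
      LinearMap.smulRight_apply, LinearMap.proj_apply]
  -- key membership: projections onto coordinates z, j
  have hcomb : ∀ j : Fin d, j ≠ z → ∀ y ∈ U, (y z) • e z + (y j) • e j ∈ U := by
    intro j hj y hy
    have h1 := hinv j y hy
    have h2 := hinv j _ h1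
    have wz : (L j y) z = - (y j) := by
      rw [hform j hj y]
      simp [e, Pi.single_apply, Ne.symm hj]
    have wj : (L j y) j = y z := by
      rw [hform j hj y]
      simp [e, Pi.single_apply, hj]
    have hv : y - L j (L j y) = (2:ℝ) • ((y z) • e z + (y j) • e j) := by
      rw [hform j hj (L j y), wz, wj, hform j hj y]
      module
    have h3 := U.sub_mem hy h2
    rw [hv] at h3
    have h4 := U.smul_mem (2⁻¹:ℝ) h3
    rwa [smul_smul, (by norm_num : (2⁻¹:ℝ)*2 = 1), one_smul] at h4
  -- get a nonzero element
  obtain ⟨x, hx, hx0⟩ := Submodule.exists_mem_ne_zero_of_ne_bot hU0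
  obtain ⟨i, hi⟩ : ∃ i, x i ≠ 0 := by
    by_contra h
    push_neg at h
    exact hx0 (funext h)
  set j : Fin d := if i = z then ⟨1, by omega⟩ else i with hjdef
  have hjz : j ≠ z := by
    rw [hjdef]
    split
    · intro hc
      rw [hzdef] at hc
      simp only [Fin.mk.injEq] at hc
      omega
    · assumption
  have hne : x z ^ 2 + x j ^ 2 ≠ 0 := by
    have h1 : x z ≠ 0 ∨ x j ≠ 0 := by
      by_cases h : i = z
      · left; rw [← h]; exact hi
      · right; rwa [hjdef, if_neg h]
    rcases h1 with h | h
    · have := mul_self_pos.mpr h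
      intro hc; nlinarith [sq_nonneg (x j)]
    · have := mul_self_pos.mpr h
      intro hc; nlinarith [sq_nonneg (x z)]
  have hu : x z • e z + x j • e j ∈ U := hcomb j hjz x hx
  have hLu := hinv j _ hu
  have e1 : (x z • e z + x j • e j) z = x z := by
    simp [e, Pi.single_apply, Ne.symm hjz]
  have e2 : (x z • e z + x j • e j) j = x j := by
    simp [e, Pi.single_apply, hjz]
  have key : (x z ^ 2 + x j ^ 2) • e z
      = x z • (x z • e z + x j • e j) - x j • (L j (x z • e z + x j • e j)) := by
    rw [hform j hjz, e1, e2]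
    module
  have hez : e z ∈ U := by
    have hmem : (x z ^ 2 + x j ^ 2) • e z ∈ U := by
      rw [key]
      exact U.sub_mem (U.smul_mem _ hu) (U.smul_mem _ hLu)
    have h5 := U.smul_mem (x z ^ 2 + x j ^ 2)⁻¹ hmem
    rwa [smul_smul, inv_mul_cancel₀ hne, one_smul] at h5
  have hall : ∀ k : Fin d, e k ∈ U := by
    intro k
    by_cases hk : k = z
    · rw [hk]; exact hez
    · have h6 := hinv k _ hez
      rwa [show L k (e z) = e k from (hLj k hk).1] at h6
  apply hUt
  rw [eq_top_iff, ← (Pi.basisFun ℝ (Fin d)).span_eq]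
  refine Submodule.span_le.2 ?_
  rintro v ⟨k, rfl⟩
  have hb : (Pi.basisFun ℝ (Fin d)) k = e k := by
    ext m; simp [Pi.basisFun_apply, Function.update,
      Pi.single_apply, eq_comm, e]
  rw [hb]
  exact hall k
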